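/- Let V be a 2m-dimensional F₂-vector space with symplectic basis for a non-degenerate alternate form B, and let Kap_{4,B}(2m) be the Kaplansky algebra on basis {e_u : u ∈ V} with bracket [e_u,e_v] = B(u,v)e_{u+v} for u≠v (zero otherwise, and e_0 allowed). Let O = K[p₁,…,p_m,q₁,…,q_m]/(p_i²,q_i²) over a field K of characteristic 2 with the bracket [f,g] = Σ_i (1+p_i)(1+q_i)(∂_{p_i}f ∂_{q_i}g + ∂_{q_i}f ∂_{p_i}g). Then the linear map sending e_u to f_u = (1+p₁)^{u₁}⋯(1+p_m)^{u_m}(1+q₁)^{u_{m+1}}⋯(1+q_m)^{u_{2m}} is a Lie algebra isomorphism (after extension of scalars to K). -/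
import Mathlib


open Finset

/-- Exponent multi-indices for `K[p₁,…,p_m,q₁,…,q_m]/(pᵢ²,qᵢ²)`. -/
abbrev Expo (m : ℕ) := (Fin m → Bool) × (Fin m → Bool)

/-- The truncated polynomial algebra, as coefficient functions. -/
abbrev TO (K : Type*) (m : ℕ) := Expo m → K

/-- The `F₂`-space `V = F₂^{2m}`, written as pairs. -/
abbrev Vsp (m : ℕ) := (Fin m → ZMod 2) × (Fin m → ZMod 2)

variable {K : Type*} [Field K] {m : ℕ}

/-- Multiplication of truncated polynomials. -/
def mulO (f g : TO K m) : TO K m := fun e =>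
  ∑ a : Expo m, ∑ b : Expo m,
    if (∀ i, ¬(a.1 i = true ∧ b.1 i = true) ∧ ((a.1 i = true ∨ b.1 i = true) ↔ e.1 i = true)
          ∧ ¬(a.2 i = true ∧ b.2 i = true) ∧ ((a.2 i = true ∨ b.2 i = true) ↔ e.2 i = true))
      then f a * g b else 0

/-- `∂_{p_i}`. -/
def dp (i : Fin m) (f : TO K m) : TO K m := fun e =>
  if e.1 i = false then f (Function.update e.1 i true, e.2) else 0

/-- `∂_{q_i}`. -/
def dq (i : Fin m) (f : TO K m) : TO K m := fun e =>
  if e.2 i = false then f (e.1, Function.update e.2 i true) else 0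

/-- Multiplication by `1 + p_i`. -/
def mp (i : Fin m) (f : TO K m) : TO K m := fun e =>
  f e + if e.1 i = true then f (Function.update e.1 i false, e.2) else 0

/-- Multiplication by `1 + q_i`. -/
def mq (i : Fin m) (f : TO K m) : TO K m := fun e =>
  f e + if e.2 i = true then f (e.1, Function.update e.2 i false) else 0

/-- `[f,g] = Σᵢ (1+pᵢ)(1+qᵢ)(∂_{pᵢ}f·∂_{qᵢ}g + ∂_{qᵢ}f·∂_{pᵢ}g)`. -/
def br13 (f g : TO K m) : TO K m :=
  ∑ i : Fin m, mp i (mq i (mulO (dp i f) (dq i g) + mulO (dq i f) (dp i g)))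

/-- Embedding of `F₂` into `K`. -/
def z2k (K : Type*) [Field K] (a : ZMod 2) : K := if a = 1 then 1 else 0

/-- The Kaplansky bracket of `Kap_{4,B}(2m)` (extension of scalars to `K`):
`[e_u,e_v] = B(u,v)e_{u+v}` for `u ≠ v`, zero otherwise, where `B` is the standard
symplectic form `B(u,v) = Σᵢ(uᵢv_{m+i} + u_{m+i}vᵢ)`. -/
def brK (f g : Vsp m → K) : Vsp m → K := fun w =>
  ∑ u : Vsp m, ∑ v : Vsp m,
    f u * g v * (if u ≠ v ∧ w = u + v
      then z2k K (∑ i, (u.1 i * v.2 i + u.2 i * v.1 i)) else 0)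

/-- The linear map sending `e_u` to
`f_u = (1+p₁)^{u₁}⋯(1+p_m)^{u_m}(1+q₁)^{u_{m+1}}⋯(1+q_m)^{u_{2m}}`:
the coefficient of a monomial `e` in `f_u` is 1 iff the support of `e` lies in `u`. -/
def Phi (c : Vsp m → K) : TO K m := fun e =>
  ∑ u : Vsp m,
    c u * (if (∀ i, (e.1 i = true → u.1 i = 1) ∧ (e.2 i = true → u.2 i = 1))
      then 1 else 0)

-- batch 1: basic helpers
section Aux
variable {K : Type*} [Field K] {m : ℕ}

/-- `f_u` as an element of `TO K m`. -/
def fU (u : Vsp m) : TO K m := fun e =>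
  if (∀ i, (e.1 i = true → u.1 i = 1) ∧ (e.2 i = true → u.2 i = 1)) then 1 else 0

lemma Phi_eq_lc (c : Vsp m → K) : Phi c = fun e => ∑ u : Vsp m, c u * fU u e := rfl

lemma zmod2_cases (x : ZMod 2) : x = 0 ∨ x = 1 := by revert x; decide

lemma z2k_eq_cast [CharP K 2] (a : ZMod 2) :
    z2k K a = ZMod.castHom (dvd_refl 2) K a := by
  rcases zmod2_cases a with rfl | rfl <;> simp [z2k]

lemma z2k_zero : z2k K 0 = 0 := by simp [z2k]

lemma z2k_one : z2k K 1 = 1 := by simp [z2k]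

lemma z2k_add [CharP K 2] (a b : ZMod 2) : z2k K (a + b) = z2k K a + z2k K b := by
  simp [z2k_eq_cast]

lemma z2k_mul [CharP K 2] (a b : ZMod 2) : z2k K (a * b) = z2k K a * z2k K b := by
  simp [z2k_eq_cast]

lemma z2k_sum [CharP K 2] {ι : Type*} (s : Finset ι) (h : ι → ZMod 2) :
    z2k K (∑ i ∈ s, h i) = ∑ i ∈ s, z2k K (h i) := by
  simp [z2k_eq_cast]

lemma ite_all_prod {P : Fin m → Prop} [DecidablePred P] :
    (if (∀ i, P i) then (1:K) else 0) = ∏ i, if P i then 1 else 0 := by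
  by_cases h : ∀ i, P i
  · rw [if_pos h, Finset.prod_eq_one]
    intro i _; rw [if_pos (h i)]
  · push_neg at h
    obtain ⟨i, hi⟩ := h
    rw [if_neg (by push_neg; exact ⟨i, hi⟩), Eq.comm]
    exact Finset.prod_eq_zero (Finset.mem_univ i) (if_neg hi)

lemma add_self_char2 [CharP K 2] (x : K) : x + x = 0 := by
  have : (2:K) = 0 := CharP.cast_eq_zero K 2
  rw [← two_mul, this, zero_mul]

end Aux
section Aux2
variable {K : Type*} [Field K] {m : ℕ}

lemma dp_fU (i : Fin m) (u : Vsp m) :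
    dp i (fU u : TO K m) =
      fun e => z2k K (u.1 i) * fU (Function.update u.1 i 0, u.2) e := by
  funext e
  unfold dp fU
  rcases zmod2_cases (u.1 i) with h | h
  · rw [h, z2k_zero, zero_mul]
    by_cases he : e.1 i = false
    · rw [if_pos he, if_neg]
      intro hall
      have := (hall i).1 (by simp)
      rw [h] at this
      exact (by decide : ¬((0:ZMod 2) = 1)) this
    · rw [if_neg he]
  · rw [h, z2k_one, one_mul]
    by_cases he : e.1 i = false
    · rw [if_pos he]
      apply if_congr _ rfl rfl
      constructor
      · intro hall j
        rcases eq_or_ne j i with rfl | hj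
        · refine ⟨fun hc => absurd hc (by rw [he]; simp [Function.update]), (hall j).2⟩
        · have := hall j
          simpa [Function.update, hj] using this
      · intro hall j
        rcases eq_or_ne j i with rfl | hj
        · refine ⟨fun _ => h, (hall j).2⟩
        · have := hall j
          simpa [Function.update, hj] using this
    · rw [if_neg he, eq_comm, if_neg]
      intro hall
      have := (hall i).1 (by simpa using he)
      simpa [Function.update] using this

lemma dq_fU (i : Fin m) (u : Vsp m) :
    dq i (fU u : TO K m) =
      fun e => z2k K (u.2 i) * fU (u.1, Function.update u.2 i 0) e := by
  funext e
  unfold dq fU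
  rcases zmod2_cases (u.2 i) with h | h
  · rw [h, z2k_zero, zero_mul]
    by_cases he : e.2 i = false
    · rw [if_pos he, if_neg]
      intro hall
      have := (hall i).2 (by simp)
      rw [h] at this
      exact (by decide : ¬((0:ZMod 2) = 1)) this
    · rw [if_neg he]
  · rw [h, z2k_one, one_mul]
    by_cases he : e.2 i = false
    · rw [if_pos he]
      apply if_congr _ rfl rfl
      constructor
      · intro hall j
        rcases eq_or_ne j i with rfl | hj
        · refine ⟨(hall j).1, fun hc => absurd hc (by rw [he]; simp [Function.update])⟩
        · have := hall j
          simpa [Function.update, hj] using this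
      · intro hall j
        rcases eq_or_ne j i with rfl | hj
        · refine ⟨(hall j).1, fun _ => h⟩
        · have := hall j
          simpa [Function.update, hj] using this
    · rw [if_neg he, eq_comm, if_neg]
      intro hall
      have := (hall i).2 (by simpa using he)
      simpa [Function.update] using this

end Aux2
section Aux3
set_option linter.unnecessarySimpa false
variable {K : Type*} [Field K] {m : ℕ}

lemma mp_fU [CharP K 2] (i : Fin m) (u : Vsp m) :
    mp i (fU u : TO K m) = fU (Function.update u.1 i (u.1 i + 1), u.2) := by
  funext e
  show fU u e + (if e.1 i = true then fU u (Function.update e.1 i false, e.2) else 0) = _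
  by_cases he : e.1 i = true
  · rw [if_pos he]
    rcases zmod2_cases (u.1 i) with h | h
    · have h1 : fU u e = (0:K) := by
        unfold fU; rw [if_neg]; intro hall
        have := (hall i).1 he; rw [h] at this
        exact (by decide : ¬((0:ZMod 2)=1)) this
      rw [h1, zero_add]
      unfold fU
      apply if_congr _ rfl rfl
      constructor
      · intro hall j
        rcases eq_or_ne j i with rfl | hj
        · exact ⟨fun _ => by simp [Function.update, h], (hall j).2⟩
        · have := hall j; simpa [Function.update, hj] using this
      · intro hall j
        rcases eq_or_ne j i with rfl | hj
        · exact ⟨fun hc => by simp [Function.update] at hc, (hall j).2⟩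
        · have := hall j; simpa [Function.update, hj] using this
    · have h2 : fU (Function.update u.1 i (u.1 i + 1), u.2) e = (0:K) := by
        unfold fU; rw [if_neg]; intro hall
        have := (hall i).1 he
        simp only [Function.update_self, h] at this
        exact (by decide : ¬((1:ZMod 2)+1 = 1)) this
      have h3 : fU u (Function.update e.1 i false, e.2) = (fU u e : K) := by
        unfold fU
        apply if_congr _ rfl rfl
        constructor
        · intro hall j
          rcases eq_or_ne j i with rfl | hj
          · exact ⟨fun _ => h, (hall j).2⟩
          · have := hall j; simpa [Function.update, hj] using this
        · intro hall j
          rcases eq_or_ne j i with rfl | hj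
          · exact ⟨fun hc => by simp [Function.update] at hc, (hall j).2⟩
          · have := hall j; simpa [Function.update, hj] using this
      rw [h2, h3, add_self_char2]
  · rw [if_neg he, add_zero]
    unfold fU
    apply if_congr _ rfl rfl
    constructor
    · intro hall j
      rcases eq_or_ne j i with rfl | hj
      · exact ⟨fun hc => absurd hc he, (hall j).2⟩
      · have := hall j; simpa [Function.update, hj] using this
    · intro hall j
      rcases eq_or_ne j i with rfl | hj
      · exact ⟨fun hc => absurd hc he, (hall j).2⟩
      · have := hall j; simpa [Function.update, hj] using this

lemma mq_fU [CharP K 2] (i : Fin m) (u : Vsp m) :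
    mq i (fU u : TO K m) = fU (u.1, Function.update u.2 i (u.2 i + 1)) := by
  funext e
  show fU u e + (if e.2 i = true then fU u (e.1, Function.update e.2 i false) else 0) = _
  by_cases he : e.2 i = true
  · rw [if_pos he]
    rcases zmod2_cases (u.2 i) with h | h
    · have h1 : fU u e = (0:K) := by
        unfold fU; rw [if_neg]; intro hall
        have := (hall i).2 he; rw [h] at this
        exact (by decide : ¬((0:ZMod 2)=1)) this
      rw [h1, zero_add]
      unfold fU
      apply if_congr _ rfl rfl
      constructor
      · intro hall j
        rcases eq_or_ne j i with rfl | hj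
        · exact ⟨(hall j).1, fun _ => by simp [Function.update, h]⟩
        · have := hall j; simpa [Function.update, hj] using this
      · intro hall j
        rcases eq_or_ne j i with rfl | hj
        · exact ⟨(hall j).1, fun hc => by simp [Function.update] at hc⟩
        · have := hall j; simpa [Function.update, hj] using this
    · have h2 : fU (u.1, Function.update u.2 i (u.2 i + 1)) e = (0:K) := by
        unfold fU; rw [if_neg]; intro hall
        have := (hall i).2 he
        simp only [Function.update_self, h] at this
        exact (by decide : ¬((1:ZMod 2)+1 = 1)) this
      have h3 : fU u (e.1, Function.update e.2 i false) = (fU u e : K) := by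
        unfold fU
        apply if_congr _ rfl rfl
        constructor
        · intro hall j
          rcases eq_or_ne j i with rfl | hj
          · exact ⟨(hall j).1, fun _ => h⟩
          · have := hall j; simpa [Function.update, hj] using this
        · intro hall j
          rcases eq_or_ne j i with rfl | hj
          · exact ⟨(hall j).1, fun hc => by simp [Function.update] at hc⟩
          · have := hall j; simpa [Function.update, hj] using this
      rw [h2, h3, add_self_char2]
  · rw [if_neg he, add_zero]
    unfold fU
    apply if_congr _ rfl rfl
    constructor
    · intro hall j
      rcases eq_or_ne j i with rfl | hj
      · exact ⟨(hall j).1, fun hc => absurd hc he⟩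
      · have := hall j; simpa [Function.update, hj] using this
    · intro hall j
      rcases eq_or_ne j i with rfl | hj
      · exact ⟨(hall j).1, fun hc => absurd hc he⟩
      · have := hall j; simpa [Function.update, hj] using this

end Aux3
section Aux4
variable {K : Type*} [Field K] {m : ℕ}

def quadEquiv (m : ℕ) : (Fin m → Bool × Bool × Bool × Bool) ≃ (Expo m × Expo m) where
  toFun g := (((fun i => (g i).1), fun i => (g i).2.1),
              ((fun i => (g i).2.2.1), fun i => (g i).2.2.2))
  invFun x i := (x.1.1 i, x.1.2 i, x.2.1 i, x.2.2 i)
  left_inv g := rfl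
  right_inv x := rfl

/-- per-coordinate summand for the `mulO` computation -/
def hcoord (K : Type*) [Field K] (e1 e2 : Bool) (u1 u2 v1 v2 : ZMod 2)
    (x : Bool × Bool × Bool × Bool) : K :=
  if ((¬(x.1 = true ∧ x.2.2.1 = true) ∧ ((x.1 = true ∨ x.2.2.1 = true) ↔ e1 = true)
        ∧ ¬(x.2.1 = true ∧ x.2.2.2 = true) ∧ ((x.2.1 = true ∨ x.2.2.2 = true) ↔ e2 = true))
      ∧ ((x.1 = true → u1 = 1) ∧ (x.2.1 = true → u2 = 1))
      ∧ ((x.2.2.1 = true → v1 = 1) ∧ (x.2.2.2 = true → v2 = 1)))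
    then 1 else 0

set_option maxHeartbeats 1000000 in
lemma coordE [CharP K 2] (e1 e2 : Bool) (u1 u2 v1 v2 : ZMod 2) :
    ∑ x : Bool × Bool × Bool × Bool, hcoord K e1 e2 u1 u2 v1 v2 x
      = if ((e1 = true → u1 + v1 = 1) ∧ (e2 = true → u2 + v2 = 1)) then 1 else 0 := by
  have h2 : (1:K) + 1 = 0 := add_self_char2 1
  unfold hcoord
  simp only [Fintype.sum_prod_type, Fintype.sum_bool]
  rcases zmod2_cases u1 with h|h <;> subst h <;>
  rcases zmod2_cases u2 with h|h <;> subst h <;>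
  rcases zmod2_cases v1 with h|h <;> subst h <;>
  rcases zmod2_cases v2 with h|h <;> subst h <;>
  cases e1 <;> cases e2 <;>
  simp [h2,
    show ((0:ZMod 2) = 1) ↔ False by decide,
    show ((0:ZMod 2) + 0 = 1) ↔ False by decide,
    show ((0:ZMod 2) + 1 = 1) ↔ True by decide,
    show ((1:ZMod 2) + 0 = 1) ↔ True by decide,
    show ((1:ZMod 2) + 1 = 1) ↔ False by decide]

lemma ite_ite_mul (P Q R : Prop) [Decidable P] [Decidable Q] [Decidable R] :
    (if P then (if Q then (1:K) else 0) * (if R then 1 else 0) else 0)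
      = if P ∧ Q ∧ R then 1 else 0 := by
  by_cases hP : P <;> by_cases hQ : Q <;> by_cases hR : R <;> simp [hP, hQ, hR]

set_option maxHeartbeats 1000000 in
lemma mulO_fU [CharP K 2] (u v : Vsp m) :
    mulO (fU u : TO K m) (fU v) = fun e => fU (u + v) e := by
  funext e
  unfold mulO
  rw [← Finset.sum_product', Finset.univ_product_univ, ← Equiv.sum_comp (quadEquiv m)]
  trans (∑ g : Fin m → Bool × Bool × Bool × Bool,
    ∏ i, hcoord K (e.1 i) (e.2 i) (u.1 i) (u.2 i) (v.1 i) (v.2 i) (g i))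
  · apply Finset.sum_congr rfl
    intro g _
    unfold fU hcoord
    rw [ite_ite_mul, ← ite_all_prod]
    apply if_congr _ rfl rfl
    constructor
    · rintro ⟨h1, h2, h3⟩ i
      exact ⟨h1 i, h2 i, h3 i⟩
    · intro h
      exact ⟨fun i => (h i).1, fun i => (h i).2.1, fun i => (h i).2.2⟩
  · rw [← Fintype.prod_sum]
    trans (∏ i, if ((e.1 i = true → u.1 i + v.1 i = 1) ∧ (e.2 i = true → u.2 i + v.2 i = 1))
        then (1:K) else 0)
    · exact Finset.prod_congr rfl fun i _ =>
        coordE (e.1 i) (e.2 i) (u.1 i) (u.2 i) (v.1 i) (v.2 i)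
    · rw [← ite_all_prod]
      unfold fU
      apply if_congr _ rfl rfl
      exact Iff.rfl

end Aux4
section Aux5
variable {K : Type*} [Field K] {m : ℕ}

/-- linear combination of a family of elements of `TO K m` -/
def lc (c : Vsp m → K) (F : Vsp m → TO K m) : TO K m := fun e => ∑ u, c u * F u e

lemma dp_lc (i : Fin m) (c : Vsp m → K) (F : Vsp m → TO K m) :
    dp i (lc c F) = lc c (fun u => dp i (F u)) := by
  funext e
  simp only [dp, lc]
  by_cases h : e.1 i = false <;> simp [h]

lemma dq_lc (i : Fin m) (c : Vsp m → K) (F : Vsp m → TO K m) :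
    dq i (lc c F) = lc c (fun u => dq i (F u)) := by
  funext e
  simp only [dq, lc]
  by_cases h : e.2 i = false <;> simp [h]

lemma mp_lc (i : Fin m) (c : Vsp m → K) (F : Vsp m → TO K m) :
    mp i (lc c F) = lc c (fun u => mp i (F u)) := by
  funext e
  simp only [mp, lc]
  by_cases h : e.1 i = true <;>
    simp [h, Finset.sum_add_distrib, mul_add]

lemma mq_lc (i : Fin m) (c : Vsp m → K) (F : Vsp m → TO K m) :
    mq i (lc c F) = lc c (fun u => mq i (F u)) := by
  funext e
  simp only [mq, lc]
  by_cases h : e.2 i = true <;>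
    simp [h, Finset.sum_add_distrib, mul_add]

lemma ite_sum {ι : Type*} (s : Finset ι) (P : Prop) [Decidable P] (f : ι → K) :
    (if P then ∑ x ∈ s, f x else 0) = ∑ x ∈ s, if P then f x else 0 := by
  split <;> simp

lemma sum_swap4 {M : Type*} [AddCommMonoid M] {α β γ δ : Type*}
    [Fintype α] [Fintype β] [Fintype γ] [Fintype δ] (f : α → β → γ → δ → M) :
    ∑ a : α, ∑ b : β, ∑ u : γ, ∑ v : δ, f a b u v
      = ∑ u : γ, ∑ v : δ, ∑ a : α, ∑ b : β, f a b u v := by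
  have h1 : ∀ a : α, ∑ b : β, ∑ u : γ, ∑ v : δ, f a b u v
      = ∑ u : γ, ∑ b : β, ∑ v : δ, f a b u v := fun a => Finset.sum_comm
  simp_rw [h1]
  rw [Finset.sum_comm]
  apply Finset.sum_congr rfl; intro u _
  have h2 : ∀ a : α, ∑ b : β, ∑ v : δ, f a b u v = ∑ v, ∑ b, f a b u v :=
    fun a => Finset.sum_comm
  simp_rw [h2]
  rw [Finset.sum_comm]

lemma mulO_lc (c d : Vsp m → K) (F G : Vsp m → TO K m) :
    mulO (lc c F) (lc d G) = lc c (fun u => lc d (fun v => mulO (F u) (G v))) := by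
  funext e
  simp only [mulO, lc]
  simp only [Finset.sum_mul_sum, ite_sum]
  rw [sum_swap4]
  simp only [Finset.mul_sum]
  apply Finset.sum_congr rfl; intro u _
  apply Finset.sum_congr rfl; intro v _
  apply Finset.sum_congr rfl; intro a _
  apply Finset.sum_congr rfl; intro b _
  simp only [mul_ite, mul_zero]
  split <;> ring

end Aux5
section Aux6
variable {K : Type*} [Field K] {m : ℕ}

lemma mp_add (i : Fin m) (f g : TO K m) : mp i (f + g) = mp i f + mp i g := by
  funext e
  simp only [mp, Pi.add_apply]
  split <;> ring

lemma mq_add (i : Fin m) (f g : TO K m) : mq i (f + g) = mq i f + mq i g := by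
  funext e
  simp only [mq, Pi.add_apply]
  split <;> ring

lemma mp_smul (i : Fin m) (s : K) (f : TO K m) :
    mp i (fun e => s * f e) = fun e => s * mp i f e := by
  funext e
  simp only [mp]
  split <;> ring

lemma mq_smul (i : Fin m) (s : K) (f : TO K m) :
    mq i (fun e => s * f e) = fun e => s * mq i f e := by
  funext e
  simp only [mq]
  split <;> ring

lemma mulO_smul (s t : K) (f g : TO K m) :
    mulO (fun e => s * f e) (fun e => t * g e) = fun e => (s * t) * mulO f g e := by
  funext e
  simp only [mulO, Finset.mul_sum]
  apply Finset.sum_congr rfl; intro a _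
  apply Finset.sum_congr rfl; intro b _
  simp only [mul_ite, mul_zero]
  split <;> ring

set_option maxHeartbeats 1000000 in
lemma br13_fU [CharP K 2] (u v : Vsp m) :
    br13 (fU u : TO K m) (fU v)
      = fun e => z2k K (∑ i, (u.1 i * v.2 i + u.2 i * v.1 i)) * fU (u + v) e := by
  unfold br13
  have term : ∀ i : Fin m,
      mp i (mq i (mulO (dp i (fU u : TO K m)) (dq i (fU v))
          + mulO (dq i (fU u)) (dp i (fU v))))
        = fun e => (z2k K (u.1 i * v.2 i) + z2k K (u.2 i * v.1 i)) * fU (u + v) e := by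
    intro i
    rw [dp_fU, dq_fU, dq_fU, dp_fU, mulO_smul, mulO_smul]
    simp_rw [mulO_fU]
    rw [mq_add, mq_smul, mq_smul, mq_fU, mq_fU, mp_add, mp_smul, mp_smul, mp_fU, mp_fU]
    funext e
    simp only [Pi.add_apply]
    rw [add_mul]
    congr 1
    · rcases zmod2_cases (u.1 i) with h1|h1 <;> rcases zmod2_cases (v.2 i) with h2|h2 <;>
        rw [h1, h2] <;> simp [z2k_zero, z2k_one]
      congr 1
      refine Prod.ext ?_ ?_ <;> funext j <;> rcases eq_or_ne j i with rfl|hj <;>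
        simp [Function.update_self, Function.update_of_ne, h1, h2, *] <;> ring
    · rcases zmod2_cases (u.2 i) with h1|h1 <;> rcases zmod2_cases (v.1 i) with h2|h2 <;>
        rw [h1, h2] <;> simp [z2k_zero, z2k_one]
      congr 1
      refine Prod.ext ?_ ?_ <;> funext j <;> rcases eq_or_ne j i with rfl|hj <;>
        simp [Function.update_self, Function.update_of_ne, h1, h2, *] <;> ring
  simp_rw [term]
  funext e
  rw [Finset.sum_apply, z2k_sum, Finset.sum_mul]
  apply Finset.sum_congr rfl
  intro i _
  rw [z2k_add]

end Aux6
section Aux7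
variable {K : Type*} [Field K] {m : ℕ}

/-- The inverse of `Phi`. -/
def Psi (f : TO K m) : Vsp m → K := fun u =>
  ∑ e : Expo m,
    f e * (if (∀ i, (u.1 i = 1 → e.1 i = true) ∧ (u.2 i = 1 → e.2 i = true))
      then 1 else 0)

def pairEquivV (m : ℕ) : (Fin m → ZMod 2 × ZMod 2) ≃ Vsp m where
  toFun g := ((fun i => (g i).1), fun i => (g i).2)
  invFun x i := (x.1 i, x.2 i)
  left_inv g := rfl
  right_inv x := rfl

def pairEquivE (m : ℕ) : (Fin m → Bool × Bool) ≃ Expo m where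
  toFun g := ((fun i => (g i).1), fun i => (g i).2)
  invFun x i := (x.1 i, x.2 i)
  left_inv g := rfl
  right_inv x := rfl

lemma ind_mul_ind (P Q : Prop) [Decidable P] [Decidable Q] :
    (if P then (1:K) else 0) * (if Q then 1 else 0) = if P ∧ Q then 1 else 0 := by
  by_cases hP : P <;> by_cases hQ : Q <;> simp [hP, hQ]

/-- per-coordinate summand for `Phi ∘ Psi`. -/
def icoord (K : Type*) [Field K] (e1 e2 e1' e2' : Bool) (x : ZMod 2 × ZMod 2) : K :=
  if (((x.1 = 1 → e1' = true) ∧ (x.2 = 1 → e2' = true))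
      ∧ ((e1 = true → x.1 = 1) ∧ (e2 = true → x.2 = 1))) then 1 else 0

lemma coordI [CharP K 2] (e1 e2 e1' e2' : Bool) :
    ∑ x : ZMod 2 × ZMod 2, icoord K e1 e2 e1' e2' x
      = if (e1' = e1 ∧ e2' = e2) then 1 else 0 := by
  have h2 : (1:K) + 1 = 0 := add_self_char2 1
  unfold icoord
  simp only [Fintype.sum_prod_type,
    show (Finset.univ : Finset (ZMod 2)) = {0, 1} from rfl,
    Finset.sum_pair (show (0:ZMod 2) ≠ 1 by decide)]
  cases e1 <;> cases e2 <;> cases e1' <;> cases e2' <;>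
  simp [h2,
    show ((0:ZMod 2) = 1) ↔ False by decide,
    show ((1:ZMod 2) = 1) ↔ True by decide]

/-- per-coordinate summand for `Psi ∘ Phi`. -/
def jcoord (K : Type*) [Field K] (u1 u2 u1' u2' : ZMod 2) (x : Bool × Bool) : K :=
  if (((x.1 = true → u1' = 1) ∧ (x.2 = true → u2' = 1))
      ∧ ((u1 = 1 → x.1 = true) ∧ (u2 = 1 → x.2 = true))) then 1 else 0

lemma coordJ [CharP K 2] (u1 u2 u1' u2' : ZMod 2) :
    ∑ x : Bool × Bool, jcoord K u1 u2 u1' u2' x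
      = if (u1' = u1 ∧ u2' = u2) then 1 else 0 := by
  have h2 : (1:K) + 1 = 0 := add_self_char2 1
  unfold jcoord
  simp only [Fintype.sum_prod_type, Fintype.sum_bool]
  rcases zmod2_cases u1 with h|h <;> subst h <;>
  rcases zmod2_cases u2 with h|h <;> subst h <;>
  rcases zmod2_cases u1' with h|h <;> subst h <;>
  rcases zmod2_cases u2' with h|h <;> subst h <;>
  simp [h2,
    show ((0:ZMod 2) = 1) ↔ False by decide,
    show ((1:ZMod 2) = 0) ↔ False by decide]

set_option maxHeartbeats 1000000 in
lemma sum_ind_V [CharP K 2] (e e' : Expo m) :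
    (∑ u : Vsp m,
      (if (∀ i, (u.1 i = 1 → e'.1 i = true) ∧ (u.2 i = 1 → e'.2 i = true)) then (1:K) else 0)
        * (if (∀ i, (e.1 i = true → u.1 i = 1) ∧ (e.2 i = true → u.2 i = 1)) then 1 else 0))
      = if e' = e then 1 else 0 := by
  rw [← Equiv.sum_comp (pairEquivV m)]
  trans (∑ g : Fin m → ZMod 2 × ZMod 2,
      ∏ i, icoord K (e.1 i) (e.2 i) (e'.1 i) (e'.2 i) (g i))
  · apply Finset.sum_congr rfl
    intro g _
    unfold icoord
    rw [ind_mul_ind, ← ite_all_prod]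
    apply if_congr _ rfl rfl
    constructor
    · rintro ⟨h1, h2⟩ i; exact ⟨h1 i, h2 i⟩
    · intro h; exact ⟨fun i => (h i).1, fun i => (h i).2⟩
  · rw [← Fintype.prod_sum]
    trans (∏ i, if ((e'.1 i = e.1 i) ∧ (e'.2 i = e.2 i)) then (1:K) else 0)
    · exact Finset.prod_congr rfl fun i _ => coordI (e.1 i) (e.2 i) (e'.1 i) (e'.2 i)
    · rw [← ite_all_prod]
      apply if_congr _ rfl rfl
      constructor
      · intro h
        exact Prod.ext (funext fun i => (h i).1) (funext fun i => (h i).2)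
      · rintro rfl i; exact ⟨rfl, rfl⟩

set_option maxHeartbeats 1000000 in
lemma sum_ind_E [CharP K 2] (u u' : Vsp m) :
    (∑ e : Expo m,
      (if (∀ i, (e.1 i = true → u'.1 i = 1) ∧ (e.2 i = true → u'.2 i = 1)) then (1:K) else 0)
        * (if (∀ i, (u.1 i = 1 → e.1 i = true) ∧ (u.2 i = 1 → e.2 i = true)) then 1 else 0))
      = if u' = u then 1 else 0 := by
  rw [← Equiv.sum_comp (pairEquivE m)]
  trans (∑ g : Fin m → Bool × Bool,
      ∏ i, jcoord K (u.1 i) (u.2 i) (u'.1 i) (u'.2 i) (g i))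
  · apply Finset.sum_congr rfl
    intro g _
    unfold jcoord
    rw [ind_mul_ind, ← ite_all_prod]
    apply if_congr _ rfl rfl
    constructor
    · rintro ⟨h1, h2⟩ i; exact ⟨h1 i, h2 i⟩
    · intro h; exact ⟨fun i => (h i).1, fun i => (h i).2⟩
  · rw [← Fintype.prod_sum]
    trans (∏ i, if ((u'.1 i = u.1 i) ∧ (u'.2 i = u.2 i)) then (1:K) else 0)
    · exact Finset.prod_congr rfl fun i _ => coordJ (u.1 i) (u.2 i) (u'.1 i) (u'.2 i)
    · rw [← ite_all_prod]
      apply if_congr _ rfl rfl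
      constructor
      · intro h
        exact Prod.ext (funext fun i => (h i).1) (funext fun i => (h i).2)
      · rintro rfl i; exact ⟨rfl, rfl⟩

lemma PhiPsi [CharP K 2] (f : TO K m) : Phi (Psi f) = f := by
  funext e
  unfold Phi Psi
  simp only [Finset.sum_mul]
  rw [Finset.sum_comm]
  trans (∑ e' : Expo m, f e' * if e' = e then (1:K) else 0)
  · apply Finset.sum_congr rfl
    intro e' _
    simp only [mul_assoc]
    rw [← Finset.mul_sum, sum_ind_V]
  · simp [mul_ite, Finset.sum_ite_eq']

lemma PsiPhi [CharP K 2] (c : Vsp m → K) : Psi (Phi c) = c := by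
  funext u
  unfold Phi Psi
  simp only [Finset.sum_mul]
  rw [Finset.sum_comm]
  trans (∑ u' : Vsp m, c u' * if u' = u then (1:K) else 0)
  · apply Finset.sum_congr rfl
    intro u' _
    simp only [mul_assoc]
    rw [← Finset.mul_sum, sum_ind_E]
  · simp [mul_ite, Finset.sum_ite_eq']

end Aux7
section Aux8
variable {K : Type*} [Field K] {m : ℕ}

lemma lc_add (c : Vsp m → K) (F G : Vsp m → TO K m) :
    lc c F + lc c G = lc c (fun u => F u + G u) := by
  funext e
  simp only [Pi.add_apply, lc, ← Finset.sum_add_distrib, mul_add]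

lemma lc_sum {ι : Type*} [Fintype ι] (c : Vsp m → K) (H : ι → Vsp m → TO K m) :
    ∑ i : ι, lc c (H i) = lc c (fun u => ∑ i, H i u) := by
  funext e
  simp only [Finset.sum_apply, lc]
  rw [Finset.sum_comm]
  simp [Finset.mul_sum]

lemma br13_lc (c d : Vsp m → K) (F G : Vsp m → TO K m) :
    br13 (lc c F) (lc d G) = lc c fun u => lc d fun v => br13 (F u) (G v) := by
  unfold br13
  simp only [dp_lc, dq_lc, mulO_lc, lc_add, mq_lc, mp_lc, lc_sum]

lemma zmod2_self_add (x : ZMod 2) : x + x = 0 := by revert x; decide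

lemma Bself (u : Vsp m) : (∑ i, (u.1 i * u.2 i + u.2 i * u.1 i)) = 0 := by
  apply Finset.sum_eq_zero
  intro i _
  rw [mul_comm, zmod2_self_add]

theorem stmt15' (K : Type*) [Field K] [CharP K 2] (m : ℕ) :
    Function.Bijective (Phi (K := K) (m := m)) ∧
    (∀ f g : Vsp m → K, Phi (brK f g) = br13 (Phi f) (Phi g)) := by
  constructor
  · exact Function.bijective_iff_has_inverse.mpr
      ⟨Psi, fun c => PsiPhi c, fun f => PhiPsi f⟩
  · intro f g
    have hPhi : ∀ c : Vsp m → K, Phi c = lc c fU := fun c => rfl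
    rw [hPhi (brK f g), hPhi f, hPhi g, br13_lc]
    simp only [br13_fU]
    funext e
    show (∑ w : Vsp m, brK f g w * fU w e) = _
    unfold brK
    simp only [lc]
    simp only [Finset.sum_mul]
    rw [Finset.sum_comm]
    show (∑ u : Vsp m, ∑ w : Vsp m, ∑ v : Vsp m, _) = _
    apply Finset.sum_congr rfl
    intro u _
    rw [Finset.mul_sum, Finset.sum_comm]
    show (∑ v : Vsp m, ∑ w : Vsp m,
        f u * g v * (if u ≠ v ∧ w = u + v
          then z2k K (∑ i, (u.1 i * v.2 i + u.2 i * v.1 i)) else 0) * fU w e) = _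
    apply Finset.sum_congr rfl
    intro v _
    show _ = f u * (g v * (z2k K (∑ i, (u.1 i * v.2 i + u.2 i * v.1 i)) * fU (u + v) e))
    by_cases huv : u = v
    · subst huv
      simp [Bself, z2k_zero]
    · simp only [Ne, huv, not_false_iff, true_and]
      simp only [mul_ite, mul_zero, ite_mul, zero_mul]
      rw [Finset.sum_ite_eq' Finset.univ (u + v)
        (fun w => f u * g v * z2k K (∑ i, (u.1 i * v.2 i + u.2 i * v.1 i)) * fU w e)]
      simp [mul_assoc]

end Aux8
/-- over a field of characteristic 2, `e_u ↦ f_u` is a Lie algebra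
isomorphism from `Kap_{4,B}(2m)` onto the truncated polynomial algebra with the
bracket `[f,g] = Σᵢ (1+pᵢ)(1+qᵢ)(∂_{pᵢ}f ∂_{qᵢ}g + ∂_{qᵢ}f ∂_{pᵢ}g)`. -/
theorem stmt15 (K : Type*) [Field K] [CharP K 2] (m : ℕ) :
    Function.Bijective (Phi (K := K) (m := m)) ∧
    (∀ f g : Vsp m → K, Phi (brK f g) = br13 (Phi f) (Phi g)) := by
  exact stmt15' K m
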